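/- arXiv:2307.12943 — 7 statements merged into one kernel-verified Lean document; each statement's English description precedes it below -/
import Mathlib

section
/- Let $P \in \mathbb{R}^{m \times m}$ be an orthogonal projection matrix (i.e., $P = P^\top = P^2$). Then the Hadamard (entrywise) product $P \circ P$ satisfies $P \circ P \preceq \mathrm{Diag}(P)$, where $\mathrm{Diag}(P)$ is the diagonal matrix with the same diagonal entries as $P$. Equivalently, $\mathrm{Diag}(P) - P \circ P$ is positive semidefinite. -/
open Matrix

theorem hadamard_sq_le_diag_of_proj {m : ℕ} (P : Matrix (Fin m) (Fin m) ℝ)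
    (hsymm : Pᵀ = P) (hproj : P * P = P) :
    (Matrix.diagonal (fun i => P i i) - Matrix.hadamard P P).PosSemidef := by
  have hPsym : ∀ i j, P i j = P j i := by
    intro i j; exact congrFun (congrFun hsymm j) i
  have hdiag : ∀ i, P i i = ∑ j, (P i j)^2 := by
    intro i
    have h := congrFun (congrFun hproj i) i
    rw [Matrix.mul_apply] at h
    rw [← h]
    exact Finset.sum_congr rfl fun j _ => by rw [sq, ← hPsym i j]
  rw [Matrix.posSemidef_iff_dotProduct_mulVec]
  constructor
  · ext i j
    simp only [conjTranspose_apply, Matrix.sub_apply, diagonal_apply, hadamard_apply, star_trivial]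
    by_cases h : i = j
    · subst h; simp
    · simp [h, Ne.symm h, hPsym j i]
  · intro x
    simp only [star_trivial, dotProduct, mulVec, Matrix.sub_apply, diagonal_apply, hadamard_apply]
    have hQ : ∑ i, x i * ∑ j, ((if i = j then P i i else 0) - P i j * P i j) * x j
        = ∑ i, ∑ j, (P i j)^2 * x i ^ 2 - ∑ i, ∑ j, (P i j)^2 * (x i * x j) := by
      rw [← Finset.sum_sub_distrib]
      refine Finset.sum_congr rfl fun i _ => ?_
      have hinner : ∑ j, ((if i = j then P i i else 0) - P i j * P i j) * x j
          = P i i * x i - ∑ j, P i j * P i j * x j := by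
        simp [sub_mul, Finset.sum_sub_distrib, ite_mul, Finset.sum_ite_eq]
      rw [hinner, hdiag i, Finset.sum_mul, mul_sub, Finset.mul_sum, Finset.mul_sum,
        ← Finset.sum_sub_distrib, ← Finset.sum_sub_distrib]
      exact Finset.sum_congr rfl fun j _ => by ring
    have hswap : ∑ i, ∑ j, (P i j)^2 * x i ^ 2 = ∑ i, ∑ j, (P i j)^2 * x j ^ 2 := by
      rw [Finset.sum_comm]
      exact Finset.sum_congr rfl fun a _ => Finset.sum_congr rfl fun b _ => by rw [hPsym b a]
    have hfin : (0:ℝ) ≤ ∑ i, ∑ j, (P i j)^2 * (x i - x j)^2 := by positivity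
    have expand2 : ∑ i, ∑ j, (P i j)^2 * (x i - x j)^2
        = ∑ i, ∑ j, (P i j)^2 * x i ^ 2 + ∑ i, ∑ j, (P i j)^2 * x j ^ 2
          - 2 * ∑ i, ∑ j, (P i j)^2 * (x i * x j) := by
      have h : ∀ i j : Fin m, (P i j)^2 * (x i - x j)^2
          = (P i j)^2 * x i ^ 2 + (P i j)^2 * x j ^ 2 - 2 * ((P i j)^2 * (x i * x j)) :=
        fun i j => by ring
      simp only [h, Finset.sum_sub_distrib, Finset.sum_add_distrib, Finset.mul_sum]
    linarith [hQ, hswap, hfin, expand2]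
end

section
/- Let $X$ be a $d \times d$ real symmetric positive definite matrix and let $H$ be a $d \times d$ real symmetric matrix such that both $X + H$ and $X - H$ are positive semidefinite. Then $\mathrm{tr}(X^{-1} H X^{-1} H) \leq d$. -/
open Matrix

lemma trace_psd_nonneg {d : ℕ} {A : Matrix (Fin d) (Fin d) ℝ} (hA : A.PosSemidef) :
    0 ≤ A.trace := by
  rw [Matrix.trace]
  apply Finset.sum_nonneg
  intro i _
  have := hA.diag_nonneg (i := i)
  simpa [dotProduct, Matrix.mulVec, Pi.single_apply] using this

open scoped MatrixOrder in
lemma trace_mul_psd_nonneg {d : ℕ} {A B : Matrix (Fin d) (Fin d) ℝ}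
    (hA : A.PosSemidef) (hB : B.PosSemidef) : 0 ≤ (A * B).trace := by
  have hS : (CFC.sqrt A) * (CFC.sqrt A) = A := CFC.sqrt_mul_sqrt_self A hA.nonneg
  have hSh : (CFC.sqrt A).IsHermitian := (CFC.sqrt_nonneg A).posSemidef.1
  have h : (A * B).trace = ((CFC.sqrt A) * B * (CFC.sqrt A)).trace := by
    conv_lhs => rw [← hS]
    rw [Matrix.mul_assoc, Matrix.trace_mul_comm, Matrix.mul_assoc]
  rw [h]
  have := hB.conjTranspose_mul_mul_same (CFC.sqrt A)
  rw [hSh.eq] at this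
  exact trace_psd_nonneg this

theorem trace_local_norm_le_dim {d : ℕ} (X H : Matrix (Fin d) (Fin d) ℝ)
    (hX : X.PosDef) (hH : H.IsHermitian)
    (h1 : (X + H).PosSemidef) (h2 : (X - H).PosSemidef) :
    (X⁻¹ * H * X⁻¹ * H).trace ≤ (d : ℝ) := by
  have hdet : IsUnit X.det := isUnit_iff_ne_zero.mpr hX.det_pos.ne'
  have hinv : X⁻¹ * X = 1 := Matrix.nonsing_inv_mul X hdet
  have hXih : X⁻¹.IsHermitian := hX.posSemidef.1.inv
  have hA : (X⁻¹ * (X + H) * X⁻¹).PosSemidef := by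
    have := h1.conjTranspose_mul_mul_same X⁻¹
    rwa [hXih.eq] at this
  have hc1 : ∀ Y : Matrix (Fin d) (Fin d) ℝ, X * (X⁻¹ * Y) = Y := by
    intro Y; rw [← Matrix.mul_assoc, Matrix.mul_nonsing_inv X hdet, Matrix.one_mul]
  have hc2 : ∀ Y : Matrix (Fin d) (Fin d) ℝ, X⁻¹ * (X * Y) = Y := by
    intro Y; rw [← Matrix.mul_assoc, hinv, Matrix.one_mul]
  have key : X⁻¹ * (X + H) * X⁻¹ * (X - H) = 1 - X⁻¹ * H * X⁻¹ * H := by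
    simp only [Matrix.mul_add, Matrix.add_mul, Matrix.mul_sub, Matrix.sub_mul,
      Matrix.mul_assoc, hc1, hc2, hinv, Matrix.mul_one, Matrix.one_mul]
    abel
  have h0 : 0 ≤ (X⁻¹ * (X + H) * X⁻¹ * (X - H)).trace :=
    trace_mul_psd_nonneg hA h2
  rw [key, Matrix.trace_sub, Matrix.trace_one] at h0
  simpa using h0
end

section
/- Let $X$ be a $d \times d$ real symmetric positive definite matrix and let $V, H$ be $d \times d$ real symmetric matrices. Then $2\,\mathrm{tr}(X^{-1} V X^{-1} V X^{-1} H X^{-1} H) + \mathrm{tr}(X^{-1} V X^{-1} H X^{-1} V X^{-1} H) \geq 0$. -/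
open Matrix
open scoped MatrixOrder

private lemma tr_tA_nonneg {d : ℕ} (A : Matrix (Fin d) (Fin d) ℝ) : 0 ≤ (Aᵀ * A).trace := by
  rw [Matrix.trace]
  refine Finset.sum_nonneg fun i _ => ?_
  simp only [Matrix.diag, Matrix.mul_apply, Matrix.transpose_apply]
  exact Finset.sum_nonneg fun j _ => mul_self_nonneg _

theorem logdet_metric_second_deriv_nonneg {d : ℕ}
    (X V H : Matrix (Fin d) (Fin d) ℝ)
    (hX : X.PosDef) (hV : V.IsHermitian) (hH : H.IsHermitian) :
    0 ≤ 2 * (X⁻¹ * V * X⁻¹ * V * X⁻¹ * H * X⁻¹ * H).trace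
        + (X⁻¹ * V * X⁻¹ * H * X⁻¹ * V * X⁻¹ * H).trace := by
  have hXi : (X⁻¹).PosDef := hX.inv
  set P : Matrix (Fin d) (Fin d) ℝ := CFC.sqrt X⁻¹ with hPdef
  have hP2 : P * P = X⁻¹ := CFC.sqrt_mul_sqrt_self X⁻¹ hXi.posSemidef.nonneg
  have hPt : Pᵀ = P := by
    rw [← conjTranspose_eq_transpose_of_trivial]
    exact (CFC.sqrt_nonneg X⁻¹).posSemidef.1
  have hVt : Vᵀ = V := by rw [← conjTranspose_eq_transpose_of_trivial]; exact hV
  have hHt : Hᵀ = H := by rw [← conjTranspose_eq_transpose_of_trivial]; exact hH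
  set A : Matrix (Fin d) (Fin d) ℝ := P * H * (P * P) * V * P with hA
  have hAt : Aᵀ = P * V * (P * P) * H * P := by
    simp [hA, transpose_mul, hPt, hVt, hHt, Matrix.mul_assoc]
  have e1 : (X⁻¹ * V * X⁻¹ * V * X⁻¹ * H * X⁻¹ * H).trace = (Aᵀ * A).trace := by
    rw [← hP2, hAt, hA]
    simp only [Matrix.mul_assoc]
    rw [Matrix.trace_mul_comm]; simp only [Matrix.mul_assoc]
    rw [Matrix.trace_mul_comm]; simp only [Matrix.mul_assoc]
    rw [Matrix.trace_mul_comm]; simp only [Matrix.mul_assoc]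
    rw [Matrix.trace_mul_comm]; simp only [Matrix.mul_assoc]
  have e2 : (X⁻¹ * V * X⁻¹ * H * X⁻¹ * V * X⁻¹ * H).trace = (A * A).trace := by
    rw [← hP2, hA]
    simp only [Matrix.mul_assoc]
    rw [Matrix.trace_mul_comm]; simp only [Matrix.mul_assoc]
    rw [Matrix.trace_mul_comm]; simp only [Matrix.mul_assoc]
    rw [Matrix.trace_mul_comm]; simp only [Matrix.mul_assoc]
    rw [Matrix.trace_mul_comm]; simp only [Matrix.mul_assoc]
  have h1 : 0 ≤ (Aᵀ * A).trace := tr_tA_nonneg A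
  have h2 : 0 ≤ ((A + Aᵀ)ᵀ * (A + Aᵀ)).trace := tr_tA_nonneg _
  have h3 : ((A + Aᵀ)ᵀ * (A + Aᵀ)).trace
      = 2 * (Aᵀ * A).trace + 2 * (A * A).trace := by
    rw [transpose_add, transpose_transpose, Matrix.add_mul, Matrix.mul_add, Matrix.mul_add,
      Matrix.trace_add, Matrix.trace_add, Matrix.trace_add, Matrix.trace_mul_comm A Aᵀ,
      show Aᵀ * Aᵀ = (A * A)ᵀ from (Matrix.transpose_mul A A).symm, Matrix.trace_transpose]
    ring
  rw [e1, e2]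
  linarith
end

section
/- Let $E$ and $T$ be real symmetric $d \times d$ matrices with $E \succeq I_d$ (so $E$ is positive definite). Then $\mathrm{tr}(E^{-1} T E^{-1} T) \leq \mathrm{tr}(T^2) = \|T\|_F^2$. -/
open Matrix

private lemma psd_trace_nonneg {d : ℕ} {A : Matrix (Fin d) (Fin d) ℝ}
    (h : A.PosSemidef) : 0 ≤ A.trace := by
  obtain ⟨B, rfl⟩ : ∃ B : Matrix (Fin d) (Fin d) ℝ, A = Bᴴ * B := by
    open scoped MatrixOrder in exact CStarAlgebra.nonneg_iff_eq_star_mul_self.mp h.nonneg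
  rw [Matrix.trace]
  refine Finset.sum_nonneg fun i _ => ?_
  rw [Matrix.diag_apply, Matrix.mul_apply]
  exact Finset.sum_nonneg fun j _ => by
    simp only [Matrix.conjTranspose_apply, RCLike.star_def, starRingEnd_apply, star_trivial]
    exact mul_self_nonneg _

theorem trace_inv_conj_le_frobenius {d : ℕ} (E T : Matrix (Fin d) (Fin d) ℝ)
    (hE : E.IsHermitian) (hT : T.IsHermitian)
    (hEI : (E - (1 : Matrix (Fin d) (Fin d) ℝ)).PosSemidef) :
    (E⁻¹ * T * E⁻¹ * T).trace ≤ (T * T).trace := by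
  classical
  have hEpd : E.PosDef := by
    have h := Matrix.PosDef.posSemidef_add hEI (Matrix.PosDef.one (n := Fin d) (R := ℝ))
    simpa using h
  -- square root of E
  set S := (open scoped MatrixOrder in CFC.sqrt E) with hS
  have hSherm : S.IsHermitian := by
    open scoped MatrixOrder in exact (CFC.sqrt_nonneg E).posSemidef.isHermitian
  have hSS : S * S = E := by
    open scoped MatrixOrder in exact CFC.sqrt_mul_sqrt_self E hEpd.posSemidef.nonneg
  have hSunit : IsUnit S.det := by
    have : IsUnit E.det := hEpd.det_pos.ne'.isUnit
    rw [← hSS, Matrix.det_mul] at this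
    exact isUnit_of_mul_isUnit_left this
  have hEinv : E⁻¹ = S⁻¹ * S⁻¹ := by
    rw [← hSS, Matrix.mul_inv_rev]
  -- 1 - E⁻¹ is PSD
  have hIA : ((1 : Matrix (Fin d) (Fin d) ℝ) - E⁻¹).PosSemidef := by
    have h := hEI.conjTranspose_mul_mul_same S⁻¹
    have hconj : (S⁻¹)ᴴ = S⁻¹ := hSherm.inv.eq
    have heq : (S⁻¹)ᴴ * (E - 1) * S⁻¹ = 1 - E⁻¹ := by
      rw [hconj, Matrix.mul_sub, Matrix.mul_one, Matrix.sub_mul, hEinv]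
      congr 1
      rw [← hSS]
      calc S⁻¹ * (S * S) * S⁻¹ = (S⁻¹ * S) * (S * S⁻¹) := by
            simp only [mul_assoc]
        _ = 1 := by rw [Matrix.nonsing_inv_mul _ hSunit, Matrix.mul_nonsing_inv _ hSunit,
            one_mul]
    rwa [heq] at h
  set A := E⁻¹ with hA
  have hApsd : A.PosSemidef := hEpd.posSemidef.inv
  obtain ⟨C, hC⟩ : ∃ C : Matrix (Fin d) (Fin d) ℝ, A = Cᴴ * C := by
    open scoped MatrixOrder in exact CStarAlgebra.nonneg_iff_eq_star_mul_self.mp hApsd.nonneg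
  -- first term: 0 ≤ tr((1-A) * T * T)
  have h1 : 0 ≤ ((1 - A) * T * T).trace := by
    have hp := hIA.conjTranspose_mul_mul_same T
    have := psd_trace_nonneg hp
    rwa [hT.eq, Matrix.trace_mul_cycle, Matrix.trace_mul_comm, ← Matrix.mul_assoc] at this
  -- second term: 0 ≤ tr(A * T * (1-A) * T)
  have h2 : 0 ≤ (A * T * (1 - A) * T).trace := by
    have hp := hIA.conjTranspose_mul_mul_same (T * Cᴴ)
    have htr := psd_trace_nonneg hp
    have hct : (T * Cᴴ)ᴴ = C * T := by
      rw [Matrix.conjTranspose_mul, Matrix.conjTranspose_conjTranspose, hT.eq]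
    rw [hct] at htr
    have : (C * T * (1 - A) * (T * Cᴴ)).trace = (A * T * (1 - A) * T).trace := by
      calc (C * T * (1 - A) * (T * Cᴴ)).trace
          = ((C * T * (1 - A) * T) * Cᴴ).trace := by rw [mul_assoc (C * T * (1 - A)) T Cᴴ,
            ← mul_assoc]
        _ = (Cᴴ * (C * T * (1 - A) * T)).trace := by rw [Matrix.trace_mul_comm]
        _ = (Cᴴ * C * T * (1 - A) * T).trace := by rw [← mul_assoc, ← mul_assoc, ← mul_assoc]
        _ = (A * T * (1 - A) * T).trace := by rw [← hC]
    linarith [htr, this.symm.le]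
  have expand1 : ((1 - A) * T * T).trace = (T * T).trace - (A * T * T).trace := by
    rw [Matrix.sub_mul, Matrix.sub_mul, one_mul, Matrix.trace_sub]
  have expand2 : (A * T * (1 - A) * T).trace
      = (A * T * T).trace - (A * T * A * T).trace := by
    rw [Matrix.mul_sub, Matrix.mul_one, Matrix.sub_mul, Matrix.trace_sub]
  rw [expand1] at h1
  rw [expand2] at h2
  have : (A * T * A * T).trace ≤ (T * T).trace := by linarith
  simpa [hA] using this
end

section
/- Let $K_1, K_2 \subset \mathbb{R}^d$ be convex sets and let $g_i : \mathrm{int}(K_i) \to \mathbb{S}_+^d$ be positive semidefinite matrix functions such that $g_i$ is $\bar\nu_i$-symmetric on $K_i$ for $i = 1, 2$; that is, for every $x$, the Dikin ellipsoid $\{y : (y-x)^\top g_i(x)(y-x) \leq 1\}$ is contained in $K_i \cap (2x - K_i)$, and $K_i \cap (2x - K_i)$ is contained in $\{y : (y-x)^\top g_i(x)(y-x) \leq \bar\nu_i\}$. Then $g_1 + g_2$ is $(\bar\nu_1 + \bar\nu_2)$-symmetric on $K_1 \cap K_2$. -/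
open Matrix

/-- Symmetry parameters of Dikin-amenable metrics are additive: if `gᵢ` is
`ν̄ᵢ`-symmetric on `Kᵢ`, then `g₁ + g₂` is `(ν̄₁ + ν̄₂)`-symmetric on `K₁ ∩ K₂`. -/
theorem symmetry_param_additive {d : ℕ} (K1 K2 : Set (Fin d → ℝ))
    (hK1 : Convex ℝ K1) (hK2 : Convex ℝ K2)
    (g1 g2 : (Fin d → ℝ) → Matrix (Fin d) (Fin d) ℝ) (ν1 ν2 : ℝ)
    (hpsd1 : ∀ x ∈ K1, (g1 x).PosSemidef)
    (hpsd2 : ∀ x ∈ K2, (g2 x).PosSemidef)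
    (hsym1 : ∀ x ∈ K1,
      (∀ y : Fin d → ℝ, (y - x) ⬝ᵥ ((g1 x) *ᵥ (y - x)) ≤ 1 →
        y ∈ K1 ∧ ∃ z ∈ K1, y = (2 : ℝ) • x - z) ∧
      (∀ y : Fin d → ℝ, (y ∈ K1 ∧ ∃ z ∈ K1, y = (2 : ℝ) • x - z) →
        (y - x) ⬝ᵥ ((g1 x) *ᵥ (y - x)) ≤ ν1))
    (hsym2 : ∀ x ∈ K2,
      (∀ y : Fin d → ℝ, (y - x) ⬝ᵥ ((g2 x) *ᵥ (y - x)) ≤ 1 →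
        y ∈ K2 ∧ ∃ z ∈ K2, y = (2 : ℝ) • x - z) ∧
      (∀ y : Fin d → ℝ, (y ∈ K2 ∧ ∃ z ∈ K2, y = (2 : ℝ) • x - z) →
        (y - x) ⬝ᵥ ((g2 x) *ᵥ (y - x)) ≤ ν2)) :
    ∀ x ∈ K1 ∩ K2,
      (∀ y : Fin d → ℝ, (y - x) ⬝ᵥ ((g1 x + g2 x) *ᵥ (y - x)) ≤ 1 →
        y ∈ K1 ∩ K2 ∧ ∃ z ∈ K1 ∩ K2, y = (2 : ℝ) • x - z) ∧
      (∀ y : Fin d → ℝ, (y ∈ K1 ∩ K2 ∧ ∃ z ∈ K1 ∩ K2, y = (2 : ℝ) • x - z) →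
        (y - x) ⬝ᵥ ((g1 x + g2 x) *ᵥ (y - x)) ≤ ν1 + ν2) := by
  rintro x ⟨hx1, hx2⟩
  have q1 : ∀ y : Fin d → ℝ, 0 ≤ (y - x) ⬝ᵥ ((g1 x) *ᵥ (y - x)) :=
    fun y => by simpa using (hpsd1 x hx1).dotProduct_mulVec_nonneg (y - x)
  have q2 : ∀ y : Fin d → ℝ, 0 ≤ (y - x) ⬝ᵥ ((g2 x) *ᵥ (y - x)) :=
    fun y => by simpa using (hpsd2 x hx2).dotProduct_mulVec_nonneg (y - x)
  have hadd : ∀ y : Fin d → ℝ, (y - x) ⬝ᵥ ((g1 x + g2 x) *ᵥ (y - x)) =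
      (y - x) ⬝ᵥ ((g1 x) *ᵥ (y - x)) + (y - x) ⬝ᵥ ((g2 x) *ᵥ (y - x)) := by
    intro y
    rw [Matrix.add_mulVec, dotProduct_add]
  constructor
  · intro y hy
    rw [hadd] at hy
    have h1 : (y - x) ⬝ᵥ ((g1 x) *ᵥ (y - x)) ≤ 1 := by linarith [q2 y]
    have h2 : (y - x) ⬝ᵥ ((g2 x) *ᵥ (y - x)) ≤ 1 := by linarith [q1 y]
    obtain ⟨hy1, z1, hz1, hyz1⟩ := (hsym1 x hx1).1 y h1
    obtain ⟨hy2, z2, hz2, hyz2⟩ := (hsym2 x hx2).1 y h2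
    have : z1 = z2 := by
      have := hyz1.symm.trans hyz2
      have : (2 : ℝ) • x - ((2 : ℝ) • x - z1) = (2 : ℝ) • x - ((2 : ℝ) • x - z2) := by
        rw [← this]
      simpa using this
    exact ⟨⟨hy1, hy2⟩, z1, ⟨hz1, this ▸ hz2⟩, hyz1⟩
  · rintro y ⟨⟨hy1, hy2⟩, z, ⟨hz1, hz2⟩, hyz⟩
    have b1 := (hsym1 x hx1).2 y ⟨hy1, z, hz1, hyz⟩
    have b2 := (hsym2 x hx2).2 y ⟨hy2, z, hz2, hyz⟩
    rw [hadd]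
    linarith
end

section
/- Let $X$ be a $d \times d$ symmetric positive definite matrix and let $\phi(X) = -\log\det X$. Then $\log\det(\nabla^2 \phi(X)) = \frac{d(d-1)}{2}\log 2 - (d+1)\log\det X$, where $\nabla^2 \phi(X)$ is the Hessian of $\phi$ viewed as a function on the $\frac{d(d+1)}{2}$-dimensional space of symmetric matrices (via the symmetric vectorization). In particular, $X \mapsto \log\det(\nabla^2\phi(X))$ is convex on the positive definite cone. -/
open Matrix Kronecker

namespace LogDetHessianAux

variable {d : ℕ}

abbrev SymIdx (d : ℕ) := {p : Fin d × Fin d // p.2.1 ≤ p.1.1}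

lemma symIdx_eq (p q : SymIdx d) (h : p.1 = q.1 ∨ p.1 = (q.1.2, q.1.1)) : p = q := by
  rcases h with h | h
  · exact Subtype.ext h
  · have h1 : p.1.1 = q.1.2 := by rw [h]
    have h2 : p.1.2 = q.1.1 := by rw [h]
    have hp := p.2
    have hq := q.2
    rw [h1, h2] at hp
    have hqq : q.1.1 = q.1.2 := Fin.ext (le_antisymm hp hq)
    refine Subtype.ext ?_
    rw [h]
    exact Prod.ext hqq.symm hqq

noncomputable def Mex (d : ℕ) : Matrix (Fin d × Fin d) (SymIdx d) ℝ :=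
  Matrix.of fun ij p => if p.1 = ij ∨ p.1 = (ij.2, ij.1) then 1 else 0

noncomputable def Lex (d : ℕ) : Matrix (SymIdx d) (Fin d × Fin d) ℝ :=
  Matrix.of fun p ij => if ij = p.1 then 1 else 0

noncomputable def rho (A : Matrix (Fin d) (Fin d) ℝ) : Matrix (SymIdx d) (SymIdx d) ℝ :=
  Matrix.of fun p q =>
    A p.1.1 q.1.1 * A p.1.2 q.1.2 +
      if q.1.1 = q.1.2 then 0 else A p.1.1 q.1.2 * A p.1.2 q.1.1

lemma Lex_mul_Mex : Lex d * Mex d = 1 := by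
  ext p q
  rw [Matrix.mul_apply, Finset.sum_eq_single p.1]
  · have hiff : (q.1 = p.1 ∨ q.1 = (p.1.2, p.1.1)) ↔ p = q := by
      constructor
      · intro h
        exact (symIdx_eq q p h).symm
      · intro h
        exact Or.inl (by rw [h])
    simp [Lex, Mex, Matrix.one_apply, hiff]
  · intro ij _ hij
    simp [Lex, hij]
  · simp

lemma pair_ne (q : SymIdx d) (hq : ¬ q.1.1 = q.1.2) : q.1 ≠ (q.1.2, q.1.1) := by
  intro h
  exact hq (congrArg Prod.fst h)

lemma diag_swap (q : SymIdx d) (hq : q.1.1 = q.1.2) :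
    ((q.1.2, q.1.1) : Fin d × Fin d) = q.1 := by
  simp [Prod.ext_iff, hq]

lemma kron_mul_Mex (A : Matrix (Fin d) (Fin d) ℝ) :
    (A ⊗ₖ A) * Mex d = Mex d * rho A := by
  ext ij q
  obtain ⟨i, j⟩ := ij
  have hL : ((A ⊗ₖ A) * Mex d) (i, j) q
      = ∑ ce ∈ ({q.1, (q.1.2, q.1.1)} : Finset (Fin d × Fin d)), A i ce.1 * A j ce.2 := by
    rw [Matrix.mul_apply]
    have key : ∀ ce : Fin d × Fin d, kroneckerMap (fun x1 x2 => x1 * x2) A A (i, j) ce * Mex d ce q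
        = if ce ∈ ({q.1, (q.1.2, q.1.1)} : Finset (Fin d × Fin d)) then A i ce.1 * A j ce.2 else 0 := by
      intro ce
      have hiff : (q.1 = ce ∨ q.1 = (ce.2, ce.1)) ↔ ce ∈ ({q.1, (q.1.2, q.1.1)} : Finset (Fin d × Fin d)) := by
        simp only [Finset.mem_insert, Finset.mem_singleton]
        constructor
        · rintro (h | h)
          · exact Or.inl h.symm
          · exact Or.inr (by rw [h])
        · rintro (h | h)
          · exact Or.inl h.symm
          · exact Or.inr (by rw [h])
      simp [Mex, kroneckerMap_apply, hiff, mul_ite]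
    simp_rw [key]
    rw [Finset.sum_ite_mem, Finset.univ_inter]
  rw [hL]
  clear hL
  rw [Matrix.mul_apply]
  by_cases hij : j.1 ≤ i.1
  · rw [Finset.sum_eq_single (⟨(i, j), hij⟩ : SymIdx d)]
    · have h1 : Mex d (i, j) ⟨(i, j), hij⟩ = 1 := by simp [Mex]
      rw [h1, one_mul]
      by_cases hq : q.1.1 = q.1.2
      · rw [diag_swap q hq, Finset.insert_eq_self.mpr (Finset.mem_singleton_self q.1),
          Finset.sum_singleton]
        simp only [rho, Matrix.of_apply, if_pos hq, add_zero]
      · rw [Finset.sum_pair (pair_ne q hq)]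
        simp only [rho, Matrix.of_apply, if_neg hq]
    · intro p _ hp
      have h0 : Mex d (i, j) p = 0 := by
        simp only [Mex, Matrix.of_apply]
        rw [if_neg]
        rintro (h | h)
        · exact hp (Subtype.ext h)
        · have := p.2
          rw [h] at this
          have hij2 : i = j := Fin.ext (le_antisymm this hij)
          refine hp (Subtype.ext ?_)
          rw [h]
          simp [Prod.ext_iff, hij2]
      rw [h0, zero_mul]
    · simp
  · have hji : i.1 ≤ j.1 := le_of_not_ge hij
    rw [Finset.sum_eq_single (⟨(j, i), hji⟩ : SymIdx d)]
    · have h1 : Mex d (i, j) ⟨(j, i), hji⟩ = 1 := by simp [Mex]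
      rw [h1, one_mul]
      by_cases hq : q.1.1 = q.1.2
      · rw [diag_swap q hq, Finset.insert_eq_self.mpr (Finset.mem_singleton_self q.1),
          Finset.sum_singleton]
        simp only [rho, Matrix.of_apply, if_pos hq, add_zero]
        rw [← hq]
        ring
      · rw [Finset.sum_pair (pair_ne q hq)]
        simp only [rho, Matrix.of_apply, if_neg hq]
        ring
    · intro p _ hp
      have h0 : Mex d (i, j) p = 0 := by
        simp only [Mex, Matrix.of_apply]
        rw [if_neg]
        rintro (h | h)
        · have := p.2
          rw [h] at this
          have hij2 : j = i := Fin.ext (le_antisymm this hji)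
          refine hp (Subtype.ext ?_)
          rw [h]
          simp [Prod.ext_iff, hij2]
        · exact hp (Subtype.ext h)
      rw [h0, zero_mul]
    · simp

lemma rho_mul (A B : Matrix (Fin d) (Fin d) ℝ) : rho (A * B) = rho A * rho B := by
  have h1 : Mex d * rho (A * B) = Mex d * (rho A * rho B) := by
    rw [← kron_mul_Mex, Matrix.mul_kronecker_mul, Matrix.mul_assoc, kron_mul_Mex,
      ← Matrix.mul_assoc, kron_mul_Mex, Matrix.mul_assoc]
  calc rho (A * B) = (Lex d * Mex d) * rho (A * B) := by rw [Lex_mul_Mex, one_mul]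
    _ = Lex d * (Mex d * rho (A * B)) := by rw [Matrix.mul_assoc]
    _ = Lex d * (Mex d * (rho A * rho B)) := by rw [h1]
    _ = (Lex d * Mex d) * (rho A * rho B) := by rw [Matrix.mul_assoc]
    _ = rho A * rho B := by rw [Lex_mul_Mex, one_mul]

lemma rho_diagonal (v : Fin d → ℝ) :
    rho (diagonal v) = diagonal (fun p : SymIdx d => v p.1.1 * v p.1.2) := by
  ext p q
  by_cases hpq : p = q
  · subst hpq
    by_cases hd : p.1.1 = p.1.2
    · simp only [rho, Matrix.of_apply, diagonal_apply_eq, if_pos hd, add_zero]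
    · simp only [rho, Matrix.of_apply, diagonal_apply_eq, if_neg hd,
        diagonal_apply_ne _ hd, zero_mul, add_zero]
  · rw [diagonal_apply_ne _ hpq]
    simp only [rho, Matrix.of_apply]
    have t1 : diagonal v p.1.1 q.1.1 * diagonal v p.1.2 q.1.2 = 0 := by
      by_cases h1 : p.1.1 = q.1.1
      · have h2 : p.1.2 ≠ q.1.2 := fun h => hpq (symIdx_eq p q (Or.inl (Prod.ext h1 h)))
        rw [diagonal_apply_ne _ h2, mul_zero]
      · rw [diagonal_apply_ne _ h1, zero_mul]
    have t2 : (if q.1.1 = q.1.2 then (0:ℝ)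
        else diagonal v p.1.1 q.1.2 * diagonal v p.1.2 q.1.1) = 0 := by
      by_cases hd : q.1.1 = q.1.2
      · rw [if_pos hd]
      · rw [if_neg hd]
        by_cases h1 : p.1.1 = q.1.2
        · have h2 : p.1.2 ≠ q.1.1 := fun h => hpq (symIdx_eq p q (Or.inr (Prod.ext h1 h)))
          rw [diagonal_apply_ne _ h2, mul_zero]
        · rw [diagonal_apply_ne _ h1, zero_mul]
    rw [t1, t2, add_zero]

lemma rho_one : rho (1 : Matrix (Fin d) (Fin d) ℝ) = 1 := by
  rw [← Matrix.diagonal_one, rho_diagonal]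
  convert Matrix.diagonal_one
  simp

lemma prod_symIdx (f : Fin d × Fin d → ℝ) :
    ∏ p : SymIdx d, f p.1
      = ∏ i : Fin d, ∏ j : Fin d, if j.1 ≤ i.1 then f (i, j) else 1 := by
  rw [← Fintype.prod_prod_type (f := fun p : Fin d × Fin d => if p.2.1 ≤ p.1.1 then f p else 1)]
  rw [← Finset.prod_filter]
  exact (Finset.prod_subtype _ (by simp) f).symm

lemma filter_le_card (i : Fin d) :
    (Finset.univ.filter (fun j : Fin d => j.1 ≤ i.1)).card = i.1 + 1 := by
  have : Finset.univ.filter (fun j : Fin d => j.1 ≤ i.1) = Finset.Iic i := by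
    ext j
    simp only [Finset.mem_filter, Finset.mem_univ, true_and, Finset.mem_Iic]
    exact Fin.le_def.symm
  rw [this, Fin.card_Iic]

lemma filter_ge_card (j : Fin d) :
    (Finset.univ.filter (fun i : Fin d => j.1 ≤ i.1)).card = d - j.1 := by
  have : Finset.univ.filter (fun i : Fin d => j.1 ≤ i.1) = Finset.Ici j := by
    ext i
    simp only [Finset.mem_filter, Finset.mem_univ, true_and, Finset.mem_Ici]
    exact Iff.symm (Iff.trans Fin.le_def Iff.rfl)
  rw [this, Fin.card_Ici]

lemma filter_lt_card (i : Fin d) :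
    (Finset.univ.filter (fun j : Fin d => j.1 < i.1)).card = i.1 := by
  have : Finset.univ.filter (fun j : Fin d => j.1 < i.1) = Finset.Iio i := by
    ext j
    simp only [Finset.mem_filter, Finset.mem_univ, true_and, Finset.mem_Iio]
    exact Fin.lt_def.symm
  rw [this, Fin.card_Iio]

lemma prod_symIdx_pair (v : Fin d → ℝ) :
    ∏ p : SymIdx d, (v p.1.1 * v p.1.2) = (∏ i, v i) ^ (d + 1) := by
  rw [prod_symIdx (fun ij => v ij.1 * v ij.2)]
  have step : ∀ i j : Fin d, (if j.1 ≤ i.1 then v (i, j).1 * v (i, j).2 else 1)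
      = (if j.1 ≤ i.1 then v i else 1) * (if j.1 ≤ i.1 then v j else 1) := by
    intro i j
    split_ifs <;> ring
  simp_rw [step, Finset.prod_mul_distrib]
  have h1 : ∀ i : Fin d, (∏ j : Fin d, if j.1 ≤ i.1 then v i else 1) = v i ^ (i.1 + 1) := by
    intro i
    rw [← Finset.prod_filter, Finset.prod_const, filter_le_card]
  have h2 : (∏ i : Fin d, ∏ j : Fin d, if j.1 ≤ i.1 then v j else 1)
      = ∏ j : Fin d, v j ^ (d - j.1) := by
    rw [Finset.prod_comm]
    refine Finset.prod_congr rfl fun j _ => ?_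
    rw [← Finset.prod_filter, Finset.prod_const, filter_ge_card]
  simp_rw [h1]
  rw [h2, ← Finset.prod_mul_distrib]
  have h3 : ∀ i : Fin d, v i ^ (i.1 + 1) * v i ^ (d - i.1) = v i ^ (d + 1) := by
    intro i
    rw [← pow_add]
    congr 1
    have := i.2
    omega
  simp_rw [h3]
  rw [Finset.prod_pow]

lemma MtM : (Mex d)ᵀ * Mex d
    = diagonal (fun p : SymIdx d => if p.1.1 = p.1.2 then (1:ℝ) else 2) := by
  ext p q
  rw [Matrix.mul_apply]
  simp only [Matrix.transpose_apply]
  by_cases hpq : p = q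
  · subst hpq
    have key : ∀ ij : Fin d × Fin d, Mex d ij p * Mex d ij p
        = if ij ∈ ({p.1, (p.1.2, p.1.1)} : Finset (Fin d × Fin d)) then (1:ℝ) else 0 := by
      intro ij
      have hiff : (p.1 = ij ∨ p.1 = (ij.2, ij.1)) ↔ ij ∈ ({p.1, (p.1.2, p.1.1)} : Finset (Fin d × Fin d)) := by
        simp only [Finset.mem_insert, Finset.mem_singleton]
        constructor
        · rintro (h | h)
          · exact Or.inl h.symm
          · exact Or.inr (by rw [h])
        · rintro (h | h)
          · exact Or.inl h.symm
          · exact Or.inr (by rw [h])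
      by_cases hc : p.1 = ij ∨ p.1 = (ij.2, ij.1)
      · rw [if_pos (hiff.mp hc)]
        simp [Mex, hc]
      · rw [if_neg (fun h => hc (hiff.mpr h))]
        simp [Mex, hc]
    simp_rw [key]
    rw [Finset.sum_ite_mem, Finset.univ_inter, diagonal_apply_eq]
    by_cases hd : p.1.1 = p.1.2
    · rw [diag_swap p hd, Finset.insert_eq_self.mpr (Finset.mem_singleton_self p.1),
        Finset.sum_singleton, if_pos hd]
    · rw [Finset.sum_pair (pair_ne p hd), if_neg hd]
      norm_num
  · rw [diagonal_apply_ne _ hpq]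
    refine Finset.sum_eq_zero fun ij _ => ?_
    simp only [Mex, Matrix.of_apply]
    by_cases h1 : p.1 = ij ∨ p.1 = (ij.2, ij.1)
    · by_cases h2 : q.1 = ij ∨ q.1 = (ij.2, ij.1)
      · exfalso
        apply hpq
        apply symIdx_eq
        rcases h1 with h1 | h1 <;> rcases h2 with h2 | h2
        · exact Or.inl (h1.trans h2.symm)
        · refine Or.inr ?_
          rw [h1, h2]
        · refine Or.inr ?_
          rw [h1, h2]
        · refine Or.inl ?_
          rw [h1, h2]
      · rw [if_neg h2, mul_zero]
    · rw [if_neg h1, zero_mul]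

lemma det_MtM : ((Mex d)ᵀ * Mex d).det = 2 ^ (d * (d - 1) / 2) := by
  rw [MtM, det_diagonal]
  rw [prod_symIdx (fun ij : Fin d × Fin d => if ij.1 = ij.2 then (1:ℝ) else 2)]
  have step : ∀ i j : Fin d,
      (if j.1 ≤ i.1 then (if (i, j).1 = (i, j).2 then (1:ℝ) else 2) else 1)
        = if j.1 < i.1 then 2 else 1 := by
    intro i j
    by_cases h : j.1 < i.1
    · have hne : ¬ (i, j).1 = (i, j).2 := by
        intro he
        simp only at he
        rw [he] at h
        exact lt_irrefl _ h
      rw [if_pos h.le, if_neg hne, if_pos h]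
    · by_cases h2 : j.1 ≤ i.1
      · have heq : i = j := Fin.ext (le_antisymm (not_lt.mp h) h2)
        rw [if_pos h2, if_pos (by simpa using heq), if_neg h]
      · rw [if_neg h2, if_neg h]
  simp_rw [step]
  have inner : ∀ i : Fin d, (∏ j : Fin d, if j.1 < i.1 then (2:ℝ) else 1) = 2 ^ i.1 := by
    intro i
    rw [← Finset.prod_filter, Finset.prod_const, filter_lt_card]
  simp_rw [inner]
  rw [Finset.prod_pow_eq_pow_sum]
  congr 1
  rw [Fin.sum_univ_eq_sum_range (fun i => i) d, Finset.sum_range_id]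

lemma det_rho (A : Matrix (Fin d) (Fin d) ℝ) (hA : A.IsHermitian) :
    (rho A).det = A.det ^ (d + 1) := by
  classical
  set U : Matrix (Fin d) (Fin d) ℝ := (hA.eigenvectorUnitary : Matrix (Fin d) (Fin d) ℝ) with hU
  set g : Fin d → ℝ := RCLike.ofReal ∘ hA.eigenvalues with hg
  have hspec : A = U * diagonal g * star U := hA.spectral_theorem
  have hU1 : U * star U = 1 := by
    have := (hA.eigenvectorUnitary).2
    exact Matrix.mem_unitaryGroup_iff.mp this
  have hrho1 : (rho U).det * (rho (star U)).det = 1 := by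
    rw [← det_mul, ← rho_mul, hU1, rho_one, det_one]
  have hdetU : U.det * (star U).det = 1 := by
    rw [← det_mul, hU1, det_one]
  have hdetA : A.det = ∏ i, g i := by
    rw [hspec, det_mul, det_mul, mul_comm, ← mul_assoc, mul_comm ((star U).det),
      hdetU, one_mul, det_diagonal]
  rw [hspec, rho_mul, rho_mul, det_mul, det_mul, rho_diagonal, mul_comm, ← mul_assoc,
    mul_comm ((rho (star U)).det), hrho1, one_mul, det_diagonal, prod_symIdx_pair, ← hdetA, ← hspec]

lemma key_det (X : Matrix (Fin d) (Fin d) ℝ) (hX : X.PosDef) :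
    ((Mex d)ᵀ * (X ⊗ₖ X)⁻¹ * Mex d).det = 2 ^ (d * (d - 1) / 2) * (X.det⁻¹) ^ (d + 1) := by
  have hXi : X⁻¹.PosDef := hX.inv
  rw [Matrix.inv_kronecker]
  have h2 : (Mex d)ᵀ * (X⁻¹ ⊗ₖ X⁻¹) * Mex d = ((Mex d)ᵀ * Mex d) * rho X⁻¹ := by
    rw [Matrix.mul_assoc, kron_mul_Mex, ← Matrix.mul_assoc]
  rw [h2, det_mul, det_MtM, det_rho _ hXi.isHermitian]
  congr 2
  rw [Matrix.det_nonsing_inv, Ring.inverse_eq_inv']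

lemma nat_cast_half (n : ℕ) : ((n * (n - 1) / 2 : ℕ) : ℝ) = (n : ℝ) * ((n : ℝ) - 1) / 2 := by
  cases n with
  | zero => norm_num
  | succ m =>
    simp only [Nat.succ_sub_one]
    have hdvd : 2 ∣ (m + 1) * m := by
      rw [mul_comm]
      exact (Nat.even_mul_succ_self m).two_dvd
    have h2 : (m + 1) * m / 2 * 2 = (m + 1) * m := Nat.div_mul_cancel hdvd
    have h3 := congrArg (Nat.cast : ℕ → ℝ) h2
    push_cast at h3 ⊢
    linarith

lemma key_log (X : Matrix (Fin d) (Fin d) ℝ) (hX : X.PosDef) :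
    Real.log ((Mex d)ᵀ * (X ⊗ₖ X)⁻¹ * Mex d).det
      = (d : ℝ) * ((d : ℝ) - 1) / 2 * Real.log 2 - ((d : ℝ) + 1) * Real.log X.det := by
  have hd : 0 < X.det := hX.det_pos
  rw [key_det X hX, Real.log_mul (by positivity) (by positivity), Real.log_pow,
    Real.log_pow, Real.log_inv, nat_cast_half]
  push_cast
  ring

lemma posDef_smul {Y : Matrix (Fin d) (Fin d) ℝ} (hY : Y.PosDef) {c : ℝ} (hc : 0 < c) :
    (c • Y).PosDef := by
  refine Matrix.PosDef.of_dotProduct_mulVec_pos ?_ fun x hx => ?_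
  · have : (c • Y)ᴴ = c • Yᴴ := by
      rw [conjTranspose_smul]
      simp
    rw [Matrix.IsHermitian, this, hY.1]
  · rw [Matrix.smul_mulVec]
    simp only [dotProduct_smul, smul_eq_mul]
    exact mul_pos hc (hY.dotProduct_mulVec_pos hx)

lemma convex_posDef : Convex ℝ {Y : Matrix (Fin d) (Fin d) ℝ | Y.PosDef} := by
  intro Y hY Z hZ a b ha hb hab
  simp only [Set.mem_setOf_eq] at *
  rcases eq_or_lt_of_le ha with ha0 | ha0
  · have hb1 : b = 1 := by linarith
    simpa [← ha0, hb1] using hZ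
  rcases eq_or_lt_of_le hb with hb0 | hb0
  · have ha1 : a = 1 := by linarith
    simpa [← hb0, ha1] using hY
  exact (posDef_smul hY ha0).add (posDef_smul hZ hb0)

lemma posDef_conj {Z B : Matrix (Fin d) (Fin d) ℝ} (hZ : Z.PosDef) (hB : B.IsHermitian)
    (hBdet : IsUnit B.det) : (B * Z * B).PosDef := by
  have hrw : B * Z * B = Bᴴ * Z * B := by rw [show Bᴴ = B from hB]
  refine Matrix.PosDef.of_dotProduct_mulVec_pos ?_ fun x hx => ?_
  · rw [hrw]
    exact isHermitian_conjTranspose_mul_mul B hZ.1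
  · rw [hrw]
    have hBx : B *ᵥ x ≠ 0 := by
      intro h0
      apply hx
      have : B⁻¹ *ᵥ (B *ᵥ x) = x := by
        rw [mulVec_mulVec, Matrix.nonsing_inv_mul _ hBdet, one_mulVec]
      rw [h0, mulVec_zero] at this
      exact this.symm
    simpa only [star_mulVec, dotProduct_mulVec, vecMul_vecMul] using hZ.dotProduct_mulVec_pos hBx

open MatrixOrder in
lemma logdet_concave :
    ConcaveOn ℝ {Y : Matrix (Fin d) (Fin d) ℝ | Y.PosDef} (fun Y => Real.log Y.det) := by
  refine ⟨convex_posDef, ?_⟩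
  intro Y hY Z hZ a b ha hb hab
  simp only [Set.mem_setOf_eq] at hY hZ
  simp only [smul_eq_mul]
  rcases eq_or_lt_of_le ha with ha0 | ha0
  · have hb1 : b = 1 := by linarith
    simp [← ha0, hb1]
  rcases eq_or_lt_of_le hb with hb0 | hb0
  · have ha1 : a = 1 := by linarith
    simp [← hb0, ha1]
  -- main case
  set S := CFC.sqrt Y with hSdef
  have hS : S.PosSemidef := (CFC.sqrt_nonneg Y).posSemidef
  have hSS : S * S = Y := CFC.sqrt_mul_sqrt_self Y hY.posSemidef.nonneg
  have hdetY : 0 < Y.det := hY.det_pos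
  have hdetZ : 0 < Z.det := hZ.det_pos
  have hdetS2 : S.det * S.det = Y.det := by rw [← det_mul, hSS]
  have hdetS : S.det ≠ 0 := by
    intro h
    rw [h, mul_zero] at hdetS2
    exact hdetY.ne hdetS2
  have hSunit : IsUnit S.det := IsUnit.mk0 _ hdetS
  have hSinv1 : S * S⁻¹ = 1 := Matrix.mul_nonsing_inv _ hSunit
  have hSinv2 : S⁻¹ * S = 1 := Matrix.nonsing_inv_mul _ hSunit
  have hSinvH : S⁻¹.IsHermitian := hS.1.inv
  have hSinvUnit : IsUnit (S⁻¹).det := by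
    rw [Matrix.det_nonsing_inv, Ring.inverse_eq_inv']
    exact IsUnit.mk0 _ (inv_ne_zero hdetS)
  set W := S⁻¹ * Z * S⁻¹ with hWdef
  have hW : W.PosDef := posDef_conj hZ hSinvH hSinvUnit
  have hWdet : W.det = Y.det⁻¹ * Z.det := by
    rw [hWdef, det_mul, det_mul, Matrix.det_nonsing_inv, Ring.inverse_eq_inv', ← hdetS2]
    field_simp
    try ring
  -- decomposition
  have hdecomp : a • Y + b • Z = S * (a • (1 : Matrix (Fin d) (Fin d) ℝ) + b • W) * S := by
    rw [Matrix.mul_add, Matrix.add_mul]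
    congr 1
    · rw [Matrix.mul_smul, Matrix.smul_mul, Matrix.mul_one, hSS]
    · rw [Matrix.mul_smul, Matrix.smul_mul]
      congr 1
      have hc : S * (S⁻¹ * Z * S⁻¹) * S = Z := by
        rw [Matrix.mul_assoc S⁻¹ Z S⁻¹, ← Matrix.mul_assoc S S⁻¹ (Z * S⁻¹), hSinv1, one_mul,
          Matrix.mul_assoc Z S⁻¹ S, hSinv2, Matrix.mul_one]
      rw [hWdef]
      exact hc.symm
  -- spectral decomposition of W
  have hWH : W.IsHermitian := hW.1
  set μ : Fin d → ℝ := hWH.eigenvalues with hμdef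
  have hμpos : ∀ i, 0 < μ i := fun i => hW.eigenvalues_pos i
  set U : Matrix (Fin d) (Fin d) ℝ := (hWH.eigenvectorUnitary : Matrix (Fin d) (Fin d) ℝ)
    with hUdef
  have hU1 : U * star U = 1 := Matrix.mem_unitaryGroup_iff.mp (hWH.eigenvectorUnitary).2
  have hdetU : U.det * (star U).det = 1 := by rw [← det_mul, hU1, det_one]
  have hg : (RCLike.ofReal ∘ μ : Fin d → ℝ) = μ := by
    funext i
    simp [RCLike.ofReal_real_eq_id]
  have hspec : W = U * diagonal μ * star U := by
    have := hWH.spectral_theorem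
    rwa [hg] at this
  have hT : a • (1 : Matrix (Fin d) (Fin d) ℝ) + b • W
      = U * diagonal (fun i => a + b * μ i) * star U := by
    have hone : (1 : Matrix (Fin d) (Fin d) ℝ) = U * 1 * star U := by
      rw [Matrix.mul_one, hU1]
    have hdiag : diagonal (fun i => a + b * μ i)
        = a • (1 : Matrix (Fin d) (Fin d) ℝ) + b • diagonal μ := by
      rw [← Matrix.diagonal_one, ← Matrix.diagonal_smul, ← Matrix.diagonal_smul,
        Matrix.diagonal_add]
      congr 1
      funext i
      simp [smul_eq_mul]
    rw [hdiag, Matrix.mul_add, Matrix.add_mul]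
    congr 1
    · rw [Matrix.mul_smul, Matrix.smul_mul, Matrix.mul_one, hU1]
    · rw [Matrix.mul_smul, Matrix.smul_mul, ← hspec]
  have hTdet : (a • (1 : Matrix (Fin d) (Fin d) ℝ) + b • W).det = ∏ i, (a + b * μ i) := by
    rw [hT, det_mul, det_mul, det_diagonal]
    have : U.det * (∏ i, (a + b * μ i)) * (star U).det
        = (U.det * (star U).det) * ∏ i, (a + b * μ i) := by ring
    rw [this, hdetU, one_mul]
  have hfacpos : ∀ i, 0 < a + b * μ i := fun i =>
    add_pos_of_nonneg_of_pos (le_of_lt ha0) (mul_pos hb0 (hμpos i))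
  have hTdetpos : 0 < (a • (1 : Matrix (Fin d) (Fin d) ℝ) + b • W).det := by
    rw [hTdet]
    exact Finset.prod_pos fun i _ => hfacpos i
  -- the main computation
  have hdettotal : (a • Y + b • Z).det
      = Y.det * (a • (1 : Matrix (Fin d) (Fin d) ℝ) + b • W).det := by
    rw [hdecomp, det_mul, det_mul, ← hdetS2]
    ring
  have hlogi : ∀ i, b * Real.log (μ i) ≤ Real.log (a + b * μ i) := by
    intro i
    have hcon := strictConcaveOn_log_Ioi.concaveOn.2 (Set.mem_Ioi.mpr one_pos)
      (Set.mem_Ioi.mpr (hμpos i)) ha hb hab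
    simpa [smul_eq_mul, Real.log_one] using hcon
  have hprodμ : ∏ i, μ i = W.det := by
    have := hWH.det_eq_prod_eigenvalues
    simpa using this.symm
  have hsum : b * Real.log (∏ i, μ i) ≤ ∑ i, Real.log (a + b * μ i) := by
    rw [Real.log_prod (fun i _ => (hμpos i).ne'), Finset.mul_sum]
    exact Finset.sum_le_sum fun i _ => hlogi i
  have hlogW : Real.log W.det = Real.log Z.det - Real.log Y.det := by
    rw [hWdet, Real.log_mul (inv_ne_zero hdetY.ne') hdetZ.ne', Real.log_inv]
    ring
  rw [hprodμ, hlogW] at hsum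
  rw [hdettotal, Real.log_mul hdetY.ne' hTdetpos.ne', hTdet,
    Real.log_prod (fun i _ => (hfacpos i).ne')]
  have haux : a * Real.log Y.det = Real.log Y.det - b * Real.log Y.det := by
    have : a = 1 - b := by linarith
    rw [this]
    ring
  linarith

lemma convexOn_of_eqOn {E : Type*} [AddCommMonoid E] [Module ℝ E] {s : Set E} {f g : E → ℝ}
    (hg : ConvexOn ℝ s g) (h : ∀ x ∈ s, f x = g x) : ConvexOn ℝ s f := by
  refine ⟨hg.1, fun x hx y hy a b ha hb hab => ?_⟩
  rw [h _ (hg.1 hx hy ha hb hab), h _ hx, h _ hy]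
  exact hg.2 hx hy ha hb hab

end LogDetHessianAux

open LogDetHessianAux in
/-- For `φ(X) = -log det X` on the PD cone, with `M` the matrix mapping the symmetric
vectorization to the full vectorization, `∇²φ(X) = Mᵀ (X ⊗ X)⁻¹ M` and
`log det ∇²φ(X) = (d(d-1)/2) log 2 - (d+1) log det X`; in particular
`X ↦ log det ∇²φ(X)` is convex on the cone of symmetric positive definite matrices. -/
theorem logdet_hessian_formula_and_convex {d : ℕ}
    (M : Matrix (Fin d × Fin d) {p : Fin d × Fin d // p.2.1 ≤ p.1.1} ℝ)
    (hM : ∀ (i j : Fin d) (p : {p : Fin d × Fin d // p.2.1 ≤ p.1.1}),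
      M (i, j) p = if p.1 = (i, j) ∨ p.1 = (j, i) then 1 else 0)
    (X : Matrix (Fin d) (Fin d) ℝ) (hX : X.PosDef) :
    Real.log (Mᵀ * (X ⊗ₖ X)⁻¹ * M).det
      = (d : ℝ) * ((d : ℝ) - 1) / 2 * Real.log 2 - ((d : ℝ) + 1) * Real.log X.det
    ∧ ConvexOn ℝ {Y : Matrix (Fin d) (Fin d) ℝ | Y.PosDef}
        (fun Y => Real.log (Mᵀ * (Y ⊗ₖ Y)⁻¹ * M).det) := by
  have hMeq : M = Mex d := by
    ext ⟨i, j⟩ p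
    rw [hM i j p]
    rfl
  subst hMeq
  constructor
  · exact key_log X hX
  · refine convexOn_of_eqOn ?_ (fun Y hY => key_log Y hY)
    have h1 : ConcaveOn ℝ {Y : Matrix (Fin d) (Fin d) ℝ | Y.PosDef}
        (fun Y : Matrix (Fin d) (Fin d) ℝ => ((d : ℝ) + 1) • Real.log Y.det) :=
      logdet_concave.smul (by positivity)
    have h2 : ConvexOn ℝ {Y : Matrix (Fin d) (Fin d) ℝ | Y.PosDef}
        ((fun _ : Matrix (Fin d) (Fin d) ℝ => (d : ℝ) * ((d : ℝ) - 1) / 2 * Real.log 2)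
          - (fun Y : Matrix (Fin d) (Fin d) ℝ => ((d : ℝ) + 1) • Real.log Y.det)) :=
      (convexOn_const _ convex_posDef).sub h1
    have hfun : (fun Y : Matrix (Fin d) (Fin d) ℝ =>
        (d : ℝ) * ((d : ℝ) - 1) / 2 * Real.log 2 - ((d : ℝ) + 1) * Real.log Y.det)
        = ((fun _ : Matrix (Fin d) (Fin d) ℝ => (d : ℝ) * ((d : ℝ) - 1) / 2 * Real.log 2)
          - (fun Y : Matrix (Fin d) (Fin d) ℝ => ((d : ℝ) + 1) • Real.log Y.det)) := by
      funext Y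
      simp [smul_eq_mul]
    rw [hfun]
    exact h2
end

section
/- Let $g$ be a symmetric positive definite $k \times k$ real matrix, let $\varepsilon > 0$, and let $M \in \mathbb{R}^{k \times m}$ satisfy $M M^\top = I_k$. Then $M (M^\top g M + \varepsilon I_m)^{-1} M^\top = (g + \varepsilon I_k)^{-1}$. -/
open Matrix

lemma smul_one_posDef {n : ℕ} {ε : ℝ} (hε : 0 < ε) :
    (ε • (1 : Matrix (Fin n) (Fin n) ℝ)).PosDef := by
  refine Matrix.PosDef.of_dotProduct_mulVec_pos ?_ (fun x hx => ?_)
  · simp [Matrix.IsHermitian]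
  · rw [smul_mulVec, one_mulVec, dotProduct_smul]
    have : 0 < star x ⬝ᵥ x := by
      rw [show (star x : Fin n → ℝ) = x from rfl] -- star on ℝ is id
      exact Matrix.dotProduct_star_self_pos_iff.mpr hx
    positivity

theorem woodbury_projection_identity {k m : ℕ}
    (g : Matrix (Fin k) (Fin k) ℝ) (hg : g.PosDef)
    (M : Matrix (Fin k) (Fin m) ℝ) (hM : M * Mᵀ = 1)
    (ε : ℝ) (hε : 0 < ε) :
    M * (Mᵀ * g * M + ε • (1 : Matrix (Fin m) (Fin m) ℝ))⁻¹ * Mᵀ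
      = (g + ε • (1 : Matrix (Fin k) (Fin k) ℝ))⁻¹ := by
  set A := Mᵀ * g * M + ε • (1 : Matrix (Fin m) (Fin m) ℝ) with hA
  set B := g + ε • (1 : Matrix (Fin k) (Fin k) ℝ) with hB
  have hMt : Mᵀ = Mᴴ := by ext i j; simp [conjTranspose]
  have hApd : A.PosDef := by
    apply Matrix.PosDef.posSemidef_add
    · rw [hMt]
      exact hg.posSemidef.conjTranspose_mul_mul_same M
    · exact smul_one_posDef hε
  have hBpd : B.PosDef := hg.add_posSemidef (smul_one_posDef hε).posSemidef
  have hAinv : IsUnit A.det := hApd.det_pos.ne'.isUnit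
  have hBinv : IsUnit B.det := hBpd.det_pos.ne'.isUnit
  have key : A * (Mᵀ * B⁻¹) = Mᵀ := by
    have : A * Mᵀ = Mᵀ * B := by
      rw [hA, hB]
      rw [Matrix.add_mul, Matrix.mul_add]
      congr 1
      · rw [Matrix.mul_assoc, Matrix.mul_assoc, show M * Mᵀ = 1 from hM, Matrix.mul_one]
      · simp [Matrix.smul_mul, Matrix.mul_smul]
    rw [← Matrix.mul_assoc, this, Matrix.mul_assoc, Matrix.mul_nonsing_inv _ hBinv,
      Matrix.mul_one]
  have : A⁻¹ * Mᵀ = Mᵀ * B⁻¹ := by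
    calc A⁻¹ * Mᵀ = A⁻¹ * (A * (Mᵀ * B⁻¹)) := by rw [key]
    _ = Mᵀ * B⁻¹ := by rw [← Matrix.mul_assoc, Matrix.nonsing_inv_mul _ hAinv, Matrix.one_mul]
  rw [Matrix.mul_assoc, this, ← Matrix.mul_assoc, hM, Matrix.one_mul]
end
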